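/- Let f : G' → G be a functor of groupoids. For each object x of G let Rf⁻¹(x) be the 2-fiber of f over x, and for each object x' of G' let f_{x'} : Aut_{G'}(x') → Aut_G(f(x')) be the induced group homomorphism. Say f is weakly proper if the induced map π_0(G') → π_0(G) on sets of isomorphism classes has finite fibers. Then: (1) every 2-fiber of f has finitely many isomorphism classes if and only if f is weakly proper and the image of every f_{x'} has finite index in Aut_G(f(x')); (2) every 2-fiber of f has finitely many isomorphism classes and all of its automorphism groups finite if and only if f is weakly proper and every f_{x'} has image of finite index and finite kernel; (3) every 2-fiber of f has finitely many isomorphism classes and only trivial automorphism groups if and only if f is weakly proper and every f_{x'} is injective with image of finite index. -/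

import Mathlib

universe v₁ v₂ u₁ u₂

open CategoryTheory

namespace GpdFiber

variable {G' : Type u₁} {G : Type u₂} [Groupoid.{v₁} G'] [Groupoid.{v₂} G]

/-- The 2-fiber of a functor of groupoids `f : G' → G` over an object `x` of `G`:
objects are pairs `(x', u)` with `u : f x' → x` (an isomorphism, since `G` is a
groupoid), morphisms `(x',u) → (x'',u')` are maps `g : x' → x''` with `u' ∘ f g = u`. -/
structure Fiber (f : G' ⥤ G) (x : G) : Type (max u₁ v₂) where
  pt : G'
  u : f.obj pt ⟶ x

instance (f : G' ⥤ G) (x : G) : Category (Fiber f x) where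
  Hom a b := {g : a.pt ⟶ b.pt // f.map g ≫ b.u = a.u}
  id a := ⟨𝟙 a.pt, by simp⟩
  comp {a b c} g h := ⟨g.1 ≫ h.1, by rw [f.map_comp, Category.assoc, h.2, g.2]⟩
  id_comp g := Subtype.ext (Category.id_comp _)
  comp_id g := Subtype.ext (Category.comp_id _)
  assoc g h i := Subtype.ext (Category.assoc _ _ _)

/-- The isomorphism-class setoid of a category. -/
def isoSetoid (C : Type*) [Category C] : Setoid C where
  r X Y := Nonempty (X ≅ Y)
  iseqv := by
    constructor
    · intro X; exact ⟨Iso.refl X⟩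
    · intro X Y h; exact ⟨h.some.symm⟩
    · intro X Y Z h₁ h₂; exact ⟨h₁.some.trans h₂.some⟩

/-- The set of isomorphism classes of objects of a category. -/
def pi0 (C : Type*) [Category C] := Quotient (isoSetoid C)

/-- The induced map on isomorphism classes. -/
def pi0Map (f : G' ⥤ G) : pi0 G' → pi0 G :=
  Quotient.map' f.obj fun _ _ h => h.map fun i => f.mapIso i

/-- A functor of groupoids is weakly proper if the induced map on isomorphism classes
has finite fibers. -/
def WeaklyProper (f : G' ⥤ G) : Prop :=
  ∀ q : pi0 G, {p : pi0 G' | pi0Map f p = q}.Finite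

/-- The homomorphism `Aut x' → Aut (f x')` induced by a functor. -/
def autHom (f : G' ⥤ G) (x' : G') : Aut x' →* Aut (f.obj x') where
  toFun i := f.mapIso i
  map_one' := (Functor.mapIso_refl f x').trans rfl
  map_mul' i j := (f.mapIso_trans j i).trans rfl

-- auxiliary development

instance (f : G' ⥤ G) (x : G) : Groupoid (Fiber f x) where
  inv {a b} g := ⟨Groupoid.inv g.1, by
    calc f.map (Groupoid.inv g.1) ≫ a.u
        = f.map (Groupoid.inv g.1) ≫ f.map g.1 ≫ b.u := by rw [g.2]
      _ = b.u := by
          rw [← Category.assoc, ← f.map_comp, Groupoid.inv_comp, f.map_id, Category.id_comp]⟩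
  inv_comp g := Subtype.ext (Groupoid.inv_comp _)
  comp_inv g := Subtype.ext (Groupoid.comp_inv _)

/-- `pi0` classes are equal iff objects are isomorphic. -/
lemma mk_eq_mk_iff {C : Type*} [Category C] {a b : C} :
    (Quotient.mk (isoSetoid C) a = Quotient.mk (isoSetoid C) b) ↔ Nonempty (a ≅ b) :=
  ⟨fun h => Quotient.exact h, fun h => Quotient.sound h⟩

lemma pi0Map_mk (f : G' ⥤ G) (x' : G') :
    pi0Map f (Quotient.mk _ x') = Quotient.mk _ (f.obj x') := rfl

/-- Automorphisms of a fiber object are the kernel of the induced map. -/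
def autEquivKer (f : G' ⥤ G) {x : G} (p : Fiber f x) :
    Aut p ≃ (autHom f p.pt).ker where
  toFun i := ⟨⟨i.hom.1, i.inv.1, congrArg Subtype.val i.hom_inv_id,
      congrArg Subtype.val i.inv_hom_id⟩, by
    show autHom f p.pt _ = 1
    refine Iso.ext ?_
    show f.map i.hom.1 = 𝟙 _
    exact (cancel_mono p.u).1 (by rw [i.hom.2, Category.id_comp])⟩
  invFun g := by
    refine ⟨⟨g.1.hom, ?_⟩, ⟨g.1.inv, ?_⟩,
      Subtype.ext g.1.hom_inv_id, Subtype.ext g.1.inv_hom_id⟩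
    · have h1 : autHom f p.pt g.1 = 1 := g.2
      have : f.map g.1.hom = 𝟙 _ := congrArg Iso.hom h1
      rw [this, Category.id_comp]
    · have h1 : autHom f p.pt g.1 = 1 := g.2
      have : f.map g.1.inv = 𝟙 _ := congrArg Iso.inv h1
      rw [this, Category.id_comp]
  left_inv i := Iso.ext (Subtype.ext rfl)
  right_inv g := Subtype.ext (Iso.ext rfl)

/-- The projection from the pi0 of a fiber to pi0 of the source. -/
def toPi0 (f : G' ⥤ G) (x : G) : pi0 (Fiber f x) → pi0 G' :=
  Quotient.map' Fiber.pt (fun a b h => h.map fun i =>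
    { hom := i.hom.1, inv := i.inv.1,
      hom_inv_id := congrArg Subtype.val i.hom_inv_id,
      inv_hom_id := congrArg Subtype.val i.inv_hom_id })

lemma toPi0_mk (f : G' ⥤ G) (x : G) (a : Fiber f x) :
    toPi0 f x (Quotient.mk _ a) = Quotient.mk _ a.pt := rfl

def cosetMap (f : G' ⥤ G) {x : G} {x' : G'} (u₀ : f.obj x' ⟶ x) (a : Aut (f.obj x')) :
    pi0 (Fiber f x) := Quotient.mk _ ⟨x', a.hom ≫ u₀⟩

lemma cosetMap_eq_iff (f : G' ⥤ G) {x : G} {x' : G'} (u₀ : f.obj x' ⟶ x)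
    (a b : Aut (f.obj x')) :
    cosetMap f u₀ a = cosetMap f u₀ b ↔ b⁻¹ * a ∈ (autHom f x').range := by
  rw [cosetMap, cosetMap]; refine mk_eq_mk_iff.trans ?_
  constructor
  · rintro ⟨i⟩
    refine ⟨Groupoid.isoEquivHom _ _ |>.symm i.hom.1, Iso.ext ?_⟩
    show f.map i.hom.1 = a.hom ≫ b.inv
    have := i.hom.2
    simp only at this
    rw [← Category.assoc] at this
    have h2 : f.map i.hom.1 ≫ b.hom = a.hom := (cancel_mono u₀).1 this
    calc f.map i.hom.1 = (f.map i.hom.1 ≫ b.hom) ≫ b.inv := by simp [b.hom_inv_id]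
      _ = a.hom ≫ b.inv := by rw [h2]
  · rintro ⟨g, hg⟩
    have : f.map g.hom = a.hom ≫ b.inv := congrArg Iso.hom hg
    refine ⟨Groupoid.isoEquivHom _ _ |>.symm ⟨g.hom, by
      show f.map g.hom ≫ (⟨x', b.hom ≫ u₀⟩ : Fiber f x).u = _
      rw [this]; simp [b.inv_hom_id_assoc]⟩⟩


lemma finite_quotient_of_index {H : Type*} [Group H] (K : Subgroup H) (h : K.index ≠ 0) :
    Finite (H ⧸ K) := by
  rw [Subgroup.index_eq_card] at h
  exact (Nat.card_ne_zero.mp h).2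

def cosetDescent (f : G' ⥤ G) {x : G} {x' : G'} (u₀ : f.obj x' ⟶ x) :
    Aut (f.obj x') ⧸ (autHom f x').range → pi0 (Fiber f x) :=
  Quotient.lift (cosetMap f u₀) fun a b hab => by
    refine (cosetMap_eq_iff f u₀ a b).mpr ?_
    simpa using (autHom f x').range.inv_mem (QuotientGroup.leftRel_apply.mp hab)

lemma cosetDescent_injective (f : G' ⥤ G) {x : G} {x' : G'} (u₀ : f.obj x' ⟶ x) :
    Function.Injective (cosetDescent f u₀) := by
  intro q r
  induction q using Quotient.inductionOn with | h a => ?_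
  induction r using Quotient.inductionOn with | h b => ?_
  intro h
  exact Quotient.sound (QuotientGroup.leftRel_apply.mpr (by
    simpa using (autHom f x').range.inv_mem ((cosetMap_eq_iff f u₀ a b).mp h)))

lemma toPi0_cosetDescent (f : G' ⥤ G) {x : G} {x' : G'} (u₀ : f.obj x' ⟶ x)
    (q : Aut (f.obj x') ⧸ (autHom f x').range) :
    toPi0 f x (cosetDescent f u₀ q) = Quotient.mk _ x' := by
  induction q using Quotient.inductionOn with | h a => rfl

lemma exists_cosetDescent (f : G' ⥤ G) {x : G} {x' : G'} (u₀ : f.obj x' ⟶ x)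
    (c : pi0 (Fiber f x)) (hc : toPi0 f x c = Quotient.mk _ x') :
    ∃ q, cosetDescent f u₀ q = c := by
  induction c using Quotient.inductionOn with | h a => ?_
  obtain ⟨e⟩ := mk_eq_mk_iff.mp hc.symm
  refine ⟨QuotientGroup.mk (Groupoid.isoEquivHom _ _ |>.symm
    ((f.map e.hom ≫ a.u) ≫ Groupoid.inv u₀)), ?_⟩
  show cosetMap f u₀ _ = _
  unfold cosetMap
  refine Quotient.sound ⟨Groupoid.isoEquivHom _ _ |>.symm ⟨e.hom, ?_⟩⟩
  show f.map e.hom ≫ a.u = ((f.map e.hom ≫ a.u) ≫ Groupoid.inv u₀) ≫ u₀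
  rw [Category.assoc, Groupoid.inv_comp, Category.comp_id]

lemma pi0Map_toPi0 (f : G' ⥤ G) (x : G) (c : pi0 (Fiber f x)) :
    pi0Map f (toPi0 f x c) = Quotient.mk _ x := by
  induction c using Quotient.inductionOn with | h a => ?_
  exact Quotient.sound ⟨Groupoid.isoEquivHom _ _ |>.symm a.u⟩

lemma finite_pi0 (f : G' ⥤ G) (hw : WeaklyProper f)
    (hi : ∀ x' : G', (autHom f x').range.index ≠ 0) (x : G) :
    Finite (pi0 (Fiber f x)) := by
  have hfib : ∀ p : pi0 G', Finite {c : pi0 (Fiber f x) // toPi0 f x c = p} := by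
    intro p
    obtain ⟨x', rfl⟩ := Quotient.exists_rep p
    by_cases hne : Nonempty {c : pi0 (Fiber f x) // toPi0 f x c = Quotient.mk _ x'}
    · obtain ⟨⟨c₀, hc₀⟩⟩ := hne
      obtain ⟨a₀, rfl⟩ := Quotient.exists_rep c₀
      obtain ⟨e⟩ := mk_eq_mk_iff.mp hc₀
      set u₀ : f.obj x' ⟶ x := f.map e.inv ≫ a₀.u with hu₀
      haveI : Finite (Aut (f.obj x') ⧸ (autHom f x').range) :=
        finite_quotient_of_index _ (hi x')
      refine Finite.of_surjective
        (fun q => (⟨cosetDescent f u₀ q, toPi0_cosetDescent f u₀ q⟩ :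
          {c : pi0 (Fiber f x) // toPi0 f x c = Quotient.mk _ x'})) ?_
      rintro ⟨c, hc⟩
      obtain ⟨q, hq⟩ := exists_cosetDescent f u₀ c hc
      exact ⟨q, Subtype.ext hq⟩
    · haveI := not_nonempty_iff.mp hne
      infer_instance
  have huniv : (Set.univ : Set (pi0 (Fiber f x))).Finite := by
    have hU : (⋃ p ∈ {p : pi0 G' | pi0Map f p = Quotient.mk _ x},
        {c : pi0 (Fiber f x) | toPi0 f x c = p}).Finite :=
      Set.Finite.biUnion (hw _) (fun p _ => Set.finite_coe_iff.mp (hfib p))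
    refine hU.subset fun c _ => ?_
    exact Set.mem_biUnion (pi0Map_toPi0 f x c) rfl
  exact Set.finite_univ_iff.mp huniv

lemma weaklyProper_of_finite (f : G' ⥤ G)
    (h : ∀ x, Finite (pi0 (Fiber f x))) : WeaklyProper f := by
  intro q
  obtain ⟨x, rfl⟩ := Quotient.exists_rep q
  rw [← Set.finite_coe_iff]
  refine Finite.of_surjective (α := pi0 (Fiber f x))
    (fun c => ⟨toPi0 f x c, pi0Map_toPi0 f x c⟩) ?_
  rintro ⟨p, hp⟩
  obtain ⟨x', rfl⟩ := Quotient.exists_rep p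
  obtain ⟨w⟩ := mk_eq_mk_iff.mp hp
  exact ⟨Quotient.mk _ ⟨x', w.hom⟩, Subtype.ext rfl⟩

lemma index_ne_zero_of_finite_pi0 (f : G' ⥤ G)
    (h : ∀ x, Finite (pi0 (Fiber f x))) (x' : G') :
    (autHom f x').range.index ≠ 0 := by
  haveI := h (f.obj x')
  haveI : Finite (Aut (f.obj x') ⧸ (autHom f x').range) :=
    Finite.of_injective (cosetDescent f (𝟙 (f.obj x'))) (cosetDescent_injective f _)
  exact Subgroup.index_ne_zero_of_finite

lemma inj_iff_subsingleton_ker {A B : Type*} [Group A] [Group B] (φ : A →* B) :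
    Function.Injective φ ↔ Subsingleton φ.ker := by
  rw [injective_iff_map_eq_one]
  constructor
  · intro h
    refine ⟨fun a b => Subtype.ext ?_⟩
    rw [h a.1 a.2, h b.1 b.2]
  · intro h a ha
    have : (⟨a, ha⟩ : φ.ker) = ⟨1, φ.ker.one_mem⟩ := Subsingleton.elim _ _
    exact congrArg Subtype.val this

/-- characterizations of (2-fiberwise) properness of a functor of
groupoids `f` in terms of weak properness and the induced homomorphisms on
automorphism groups. -/
theorem properness_characterizations (f : G' ⥤ G) :
    ((∀ x : G, Finite (pi0 (Fiber f x))) ↔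
      (WeaklyProper f ∧ ∀ x' : G', (autHom f x').range.index ≠ 0)) ∧
    ((∀ x : G, Finite (pi0 (Fiber f x)) ∧ ∀ p : Fiber f x, Finite (Aut p)) ↔
      (WeaklyProper f ∧ ∀ x' : G',
        (autHom f x').range.index ≠ 0 ∧ Finite (autHom f x').ker)) ∧
    ((∀ x : G, Finite (pi0 (Fiber f x)) ∧ ∀ p : Fiber f x, Subsingleton (Aut p)) ↔
      (WeaklyProper f ∧ ∀ x' : G',
        Function.Injective (autHom f x') ∧ (autHom f x').range.index ≠ 0)) := by
  refine ⟨⟨fun h => ⟨weaklyProper_of_finite f h, index_ne_zero_of_finite_pi0 f h⟩,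
    fun h x => finite_pi0 f h.1 h.2 x⟩, ⟨?_, ?_⟩, ⟨?_, ?_⟩⟩
  · intro h
    refine ⟨weaklyProper_of_finite f (fun x => (h x).1), fun x' =>
      ⟨index_ne_zero_of_finite_pi0 f (fun x => (h x).1) x', ?_⟩⟩
    haveI := (h (f.obj x')).2 ⟨x', 𝟙 (f.obj x')⟩
    exact Finite.of_equiv _ (autEquivKer f (⟨x', 𝟙 (f.obj x')⟩ : Fiber f (f.obj x')))
  · intro h x
    refine ⟨finite_pi0 f h.1 (fun x' => (h.2 x').1) x, fun p => ?_⟩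
    haveI := (h.2 p.pt).2
    exact Finite.of_equiv _ (autEquivKer f p).symm
  · intro h
    refine ⟨weaklyProper_of_finite f (fun x => (h x).1), fun x' =>
      ⟨?_, index_ne_zero_of_finite_pi0 f (fun x => (h x).1) x'⟩⟩
    rw [inj_iff_subsingleton_ker]
    haveI := (h (f.obj x')).2 ⟨x', 𝟙 (f.obj x')⟩
    exact (autEquivKer f (⟨x', 𝟙 (f.obj x')⟩ : Fiber f (f.obj x'))).symm.subsingleton
  · intro h x
    refine ⟨finite_pi0 f h.1 (fun x' => (h.2 x').2) x, fun p => ?_⟩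
    haveI := (inj_iff_subsingleton_ker _).mp (h.2 p.pt).1
    exact (autEquivKer f p).subsingleton

end GpdFiber
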